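/- For every positive integer k, the series ∑_{n=k}^∞ C(n-1,k-1)^2 (1/2)^{2n} converges and its value lies in the open interval (0,1). -/

import Mathlib

private lemma choose_le_two_pow' (n k : ℕ) : n.choose k ≤ 2 ^ n := by
  rcases le_or_gt k n with h | h
  · calc n.choose k ≤ ∑ m ∈ Finset.range (n + 1), n.choose m :=
        Finset.single_le_sum (fun _ _ => Nat.zero_le _) (Finset.mem_range.2 (by omega))
      _ = 2 ^ n := Nat.sum_range_choose n
  · simp [Nat.choose_eq_zero_of_lt h]

/-- The tie-probability series `∑_{n=k}^∞ C(n-1,k-1)^2 (1/2)^{2n}` (reindexed by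
`n = m + k`) converges and its value lies in `(0,1)`. -/
theorem mm_tie_series_summable_mem_Ioo (k : ℕ) (hk : 0 < k) :
    Summable (fun m : ℕ => (((m + k - 1).choose (k - 1) : ℝ)) ^ 2 * (1 / 2) ^ (2 * (m + k))) ∧
    0 < ∑' m : ℕ, (((m + k - 1).choose (k - 1) : ℝ)) ^ 2 * (1 / 2) ^ (2 * (m + k)) ∧
    ∑' m : ℕ, (((m + k - 1).choose (k - 1) : ℝ)) ^ 2 * (1 / 2) ^ (2 * (m + k)) < 1 := by
  obtain ⟨j, rfl⟩ : ∃ j, k = j + 1 := ⟨k - 1, (Nat.succ_pred_eq_of_pos hk).symm⟩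
  set a : ℕ → ℝ := fun m => ((m + j).choose j : ℝ) * (1 / 2) ^ (m + (j + 1)) with ha
  -- the negative binomial distribution sums to 1
  have hsum : HasSum a 1 := by
    have h := (hasSum_choose_mul_geometric_of_norm_lt_one (𝕜 := ℝ) j
      (r := 1/2) (by norm_num)).mul_right ((1/2 : ℝ) ^ (j + 1))
    have hval : 1 / ((1 : ℝ) - 1/2) ^ (j + 1) * (1/2) ^ (j + 1) = 1 := by
      rw [show (1 : ℝ) - 1/2 = 1/2 by norm_num, one_div, inv_mul_cancel₀ (by positivity)]
    rw [hval] at h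
    convert h using 2 with m
    · rfl
    simp only [ha, pow_add]
    ring
  have hfeq : (fun m : ℕ => (((m + (j + 1) - 1).choose ((j + 1) - 1) : ℝ)) ^ 2 *
      (1 / 2) ^ (2 * (m + (j + 1)))) = fun m => (a m) ^ 2 := by
    funext m
    have h1 : m + (j + 1) - 1 = m + j := by omega
    have h2 : (j + 1) - 1 = j := by omega
    rw [h1, h2, two_mul, pow_add, ha]
    ring
  have hnonneg : ∀ m, 0 ≤ a m := fun m => by positivity
  have hhalf : ∀ m, a m ≤ 1 / 2 := by
    intro m
    have hc : ((m + j).choose j : ℝ) ≤ 2 ^ (m + j) := by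
      exact_mod_cast Nat.cast_le.mpr (choose_le_two_pow' (m + j) j)
    have hp : (0 : ℝ) < (1 / 2 : ℝ) ^ (m + (j + 1)) := by positivity
    calc a m ≤ 2 ^ (m + j) * (1 / 2) ^ (m + (j + 1)) := by
          exact mul_le_mul_of_nonneg_right hc hp.le
      _ = 1 / 2 := by
          rw [show m + (j + 1) = (m + j) + 1 by ring, pow_succ, ← mul_assoc, ← mul_pow]
          norm_num
  have hle : ∀ m, (a m) ^ 2 ≤ (1 / 2) * a m := fun m => by
    nlinarith [hnonneg m, hhalf m]
  have hS2 : Summable fun m => (1 / 2 : ℝ) * a m := hsum.summable.mul_left _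
  have hSsq : Summable fun m => (a m) ^ 2 :=
    Summable.of_nonneg_of_le (fun m => sq_nonneg _) hle hS2
  rw [hfeq]
  refine ⟨hSsq, ?_, ?_⟩
  · refine Summable.tsum_pos hSsq (fun m => sq_nonneg _) 0 ?_
    have : a 0 = (1 / 2 : ℝ) ^ (j + 1) := by simp [ha]
    rw [this]
    positivity
  · calc ∑' m, (a m) ^ 2 ≤ ∑' m, (1 / 2) * a m := Summable.tsum_le_tsum hle hSsq hS2
      _ = (1 / 2) * ∑' m, a m := tsum_mul_left
      _ = 1 / 2 := by rw [hsum.tsum_eq]; norm_num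
      _ < 1 := by norm_num
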